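/- Let g be a natural number with g ≥ 1 and q > 0 a real number. Let δ_1, …, δ_g be nonnegative reals and ℓ_1, …, ℓ_g positive reals. Define b_0 = 0 and b_k = b_{k−1} + (q/g)·δ_k for 1 ≤ k ≤ g, and assume b_g ≤ 1. Define Y : ℝ → ℝ by Y(x) = g/(q·ℓ_k) if x ∈ (b_{k−1}, b_k] for some 1 ≤ k ≤ g, and Y(x) = 1/(2q) otherwise. Define T : ℝ → ℝ by T(z) = g/⌈g/z⌉ if z ≥ 1 and T(z) = 0 if z < 1, where ⌈·⌉ denotes the ceiling. Then for X uniformly distributed on (0,1], the expectation satisfies E[T(q·Y(X))] = Σ_{k : ℓ_k ≤ g} q·δ_k/⌈ℓ_k⌉. -/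

import Mathlib

open MeasureTheory Finset

theorem stmt_11 (g : ℕ) (hg : 1 ≤ g) (q : ℝ) (hq : 0 < q)
    (δ ℓ : ℕ → ℝ)
    (hδ : ∀ k ∈ Finset.Icc 1 g, 0 ≤ δ k)
    (hℓ : ∀ k ∈ Finset.Icc 1 g, 0 < ℓ k)
    (b : ℕ → ℝ) (hb0 : b 0 = 0)
    (hb : ∀ k ∈ Finset.Icc 1 g, b k = b (k - 1) + (q / g) * δ k)
    (hbg : b g ≤ 1)
    (Y : ℝ → ℝ)
    (hY1 : ∀ k ∈ Finset.Icc 1 g, ∀ x ∈ Set.Ioc (b (k - 1)) (b k), Y x = g / (q * ℓ k))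
    (hY2 : ∀ x : ℝ, (∀ k ∈ Finset.Icc 1 g, x ∉ Set.Ioc (b (k - 1)) (b k)) →
      Y x = 1 / (2 * q))
    (T : ℝ → ℝ)
    (hT : ∀ z : ℝ, T z = if 1 ≤ z then (g : ℝ) / ((⌈(g : ℝ) / z⌉ : ℤ) : ℝ) else 0) :
    ∫ x in Set.Ioc (0 : ℝ) 1, T (q * Y x)
      = ∑ k ∈ (Finset.Icc 1 g).filter (fun k => ℓ k ≤ (g : ℝ)),
          q * δ k / ((⌈ℓ k⌉ : ℤ) : ℝ) := by
  have hg0 : (0:ℝ) < (g:ℝ) := by exact_mod_cast hg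
  -- monotonicity of b
  have hstep : ∀ k ∈ Finset.Icc 1 g, b (k - 1) ≤ b k := by
    intro k hk
    rw [hb k hk]
    have h1 : 0 ≤ (q / g) * δ k := mul_nonneg (le_of_lt (div_pos hq hg0)) (hδ k hk)
    linarith
  have hmono : ∀ j k : ℕ, j ≤ k → k ≤ g → b j ≤ b k := by
    intro j k hjk hkg
    induction k with
    | zero => simp_all
    | succ n ih =>
      by_cases hj : j = n + 1
      · subst hj; exact le_rfl
      · have h1 : b j ≤ b n :=
          ih (Nat.lt_succ_iff.mp (lt_of_le_of_ne hjk hj)) (Nat.le_of_succ_le hkg)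
        have h2 : b n ≤ b (n + 1) := by
          have := hstep (n + 1) (Finset.mem_Icc.mpr ⟨Nat.le_add_left 1 n, hkg⟩)
          simpa using this
        linarith
  -- the constant value on each interval
  set c : ℕ → ℝ := fun k => if ℓ k ≤ (g:ℝ) then (g : ℝ) / ((⌈ℓ k⌉ : ℤ) : ℝ) else 0 with hc
  -- pointwise identity
  have key : Set.EqOn (fun x => T (q * Y x))
      (fun x => ∑ k ∈ Finset.Icc 1 g,
        Set.indicator (Set.Ioc (b (k - 1)) (b k)) (fun _ => c k) x)
      (Set.Ioc (0:ℝ) 1) := by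
    intro x hx
    by_cases hex : ∃ k ∈ Finset.Icc 1 g, x ∈ Set.Ioc (b (k - 1)) (b k)
    · obtain ⟨k, hk, hxk⟩ := hex
      obtain ⟨hk1, hkg⟩ := Finset.mem_Icc.mp hk
      have hℓk := hℓ k hk
      have hqY : q * Y x = (g : ℝ) / ℓ k := by
        rw [hY1 k hk x hxk]
        field_simp
      have hsum : (∑ j ∈ Finset.Icc 1 g,
          Set.indicator (Set.Ioc (b (j - 1)) (b j)) (fun _ => c j) x) = c k := by
        rw [Finset.sum_eq_single_of_mem k hk]
        · exact Set.indicator_of_mem hxk _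
        · intro j hj hjk
          obtain ⟨hj1, hjg⟩ := Finset.mem_Icc.mp hj
          apply Set.indicator_of_notMem
          rcases lt_or_gt_of_ne hjk with hlt | hgt
          · -- j < k : x > b (k-1) ≥ b j
            have : b j ≤ b (k - 1) := hmono j (k - 1) (Nat.le_sub_one_of_lt hlt)
              (le_trans (Nat.sub_le k 1) hkg)
            intro hmem
            exact absurd hmem.2 (not_le.mpr (lt_of_le_of_lt this hxk.1))
          · -- k < j : x ≤ b k ≤ b (j-1)
            have : b k ≤ b (j - 1) := hmono k (j - 1) (Nat.le_sub_one_of_lt hgt)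
              (le_trans (Nat.sub_le j 1) hjg)
            intro hmem
            exact absurd hmem.1 (not_lt.mpr (le_trans hxk.2 this))
      simp only
      rw [hsum, hqY, hT]
      by_cases hle : ℓ k ≤ (g:ℝ)
      · have h1 : (1:ℝ) ≤ (g:ℝ) / ℓ k := (le_div_iff₀ hℓk).mpr (by linarith)
        have h2 : (g : ℝ) / ((g:ℝ) / ℓ k) = ℓ k := by
          field_simp
        rw [if_pos h1, h2, hc]
        simp [hle]
      · have h1 : ¬ (1:ℝ) ≤ (g:ℝ) / ℓ k := by
          rw [not_le, div_lt_one hℓk]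
          linarith
        rw [if_neg h1, hc]
        simp [hle]
    · push_neg at hex
      have hYx := hY2 x hex
      have hqY : q * Y x = 1 / 2 := by
        rw [hYx]; field_simp
      simp only
      rw [hqY, hT, if_neg (by norm_num)]
      symm
      apply Finset.sum_eq_zero
      intro j hj
      exact Set.indicator_of_notMem (hex j hj) _
  rw [setIntegral_congr_fun measurableSet_Ioc key]
  have hint : ∀ k ∈ Finset.Icc 1 g,
      Integrable (fun x => Set.indicator (Set.Ioc (b (k - 1)) (b k)) (fun _ => c k) x)
        (volume.restrict (Set.Ioc (0:ℝ) 1)) := by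
    intro k hk
    apply Integrable.integrableOn
    rw [integrable_indicator_iff measurableSet_Ioc]
    exact integrableOn_const measure_Ioc_lt_top.ne
  rw [integral_finset_sum _ hint]
  have hsub : ∀ k ∈ Finset.Icc 1 g, Set.Ioc (b (k - 1)) (b k) ⊆ Set.Ioc (0:ℝ) 1 := by
    intro k hk
    obtain ⟨hk1, hkg⟩ := Finset.mem_Icc.mp hk
    have h0 : (0:ℝ) ≤ b (k - 1) := by
      have := hmono 0 (k - 1) (Nat.zero_le _) (le_trans (Nat.sub_le k 1) hkg)
      rw [hb0] at this; exact this
    have h1 : b k ≤ 1 := le_trans (hmono k g hkg le_rfl) hbg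
    exact Set.Ioc_subset_Ioc h0 h1
  have hterm : ∀ k ∈ Finset.Icc 1 g,
      (∫ x in Set.Ioc (0:ℝ) 1,
        Set.indicator (Set.Ioc (b (k - 1)) (b k)) (fun _ => c k) x)
      = (q / g) * δ k * c k := by
    intro k hk
    rw [setIntegral_indicator measurableSet_Ioc,
      Set.inter_eq_self_of_subset_right (hsub k hk), setIntegral_const,
      Real.volume_real_Ioc_of_le (hstep k hk)]
    have : b k - b (k - 1) = (q / g) * δ k := by
      rw [hb k hk]; ring
    rw [this, smul_eq_mul]
  rw [Finset.sum_congr rfl hterm, Finset.sum_filter]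
  apply Finset.sum_congr rfl
  intro k hk
  have hck : (0:ℤ) < ⌈ℓ k⌉ := Int.ceil_pos.mpr (hℓ k hk)
  have hck' : ((⌈ℓ k⌉ : ℤ) : ℝ) ≠ 0 := by exact_mod_cast hck.ne'
  simp only [hc]
  by_cases hle : ℓ k ≤ (g:ℝ)
  · rw [if_pos hle, if_pos hle]
    field_simp
  · rw [if_neg hle, if_neg hle, mul_zero]
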